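/- arXiv:2301.00898 — 3 statements merged into one kernel-verified Lean document; each statement's English description precedes it below -/
import Mathlib

section
/- Let n ≥ 2 and let λ be a partition of n with a_k parts equal to k. The average major index over the conjugacy class C_λ equals (n² − n + 2a_2 − a_1² + a_1)/4. -/
/-- The conjugacy class of `S_n` consisting of permutations of cycle type `lam`
(Mathlib's `cycleType` omits fixed points, so we compare with the parts of `lam` not equal
to `1`). -/
noncomputable def conjClass (n : ℕ) (lam : n.Partition) : Finset (Equiv.Perm (Fin n)) :=
  Finset.univ.filter fun ω => ω.cycleType = Multiset.filter (fun i => i ≠ 1) lam.parts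

/-- The successor of `i` in `Fin n`, computed modulo `n`. -/
def succMod {n : ℕ} (i : Fin n) : Fin n := ⟨((i : ℕ) + 1) % n, Nat.mod_lt _ i.pos⟩

/-- The major index of a permutation: the sum of the (1-based) positions of its descents.
A `0`-based position `i : Fin n` corresponds to the `1`-based position `i + 1`. -/
def maj {n : ℕ} (ω : Equiv.Perm (Fin n)) : ℕ :=
  ∑ i ∈ Finset.univ.filter (fun i : Fin n => (i : ℕ) + 1 < n ∧ ω (succMod i) < ω i),
    ((i : ℕ) + 1)

open Equiv Equiv.Perm Finset

section TwoCycles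

variable {α : Type*} [Fintype α] [DecidableEq α]

omit [Fintype α] [DecidableEq α] in
lemma pow_mem_pair {σ : Perm α} {a : α} (h2 : σ (σ a) = a) (k : ℕ) :
    (σ ^ k) a = a ∨ (σ ^ k) a = σ a := by
  induction k with
  | zero => left; simp
  | succ k ih =>
    rw [pow_succ', mul_apply]
    rcases ih with h | h
    · right; rw [h]
    · left; rw [h, h2]
lemma support_cycleOf_pair {σ : Perm α} {a : α} (h1 : σ a ≠ a) (h2 : σ (σ a) = a) :
    (σ.cycleOf a).support = {a, σ a} := by
  ext y
  rw [mem_support_cycleOf_iff]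
  constructor
  · rintro ⟨hsc, -⟩
    obtain ⟨i, -, hi⟩ := hsc.exists_pow_eq'
    rcases pow_mem_pair h2 i with h | h <;> simp [← hi, h]
  · intro hy
    refine ⟨?_, mem_support.2 h1⟩
    rcases Finset.mem_insert.1 hy with rfl | hy
    · exact SameCycle.refl _ _
    · rw [Finset.mem_singleton.1 hy]
      exact ⟨1, by simp⟩

lemma two_cycle_iff {σ : Perm α} {a : α} :
    (σ a ≠ a ∧ σ (σ a) = a) ↔ a ∈ σ.support ∧ (σ.cycleOf a).support.card = 2 := by
  constructor
  · rintro ⟨h1, h2⟩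
    refine ⟨mem_support.2 h1, ?_⟩
    rw [support_cycleOf_pair h1 h2, Finset.card_insert_of_notMem (by simp [Ne.symm h1]),
      Finset.card_singleton]
  · rintro ⟨ha, hc⟩
    have h1 : σ a ≠ a := mem_support.1 ha
    refine ⟨h1, ?_⟩
    have hcy : (σ.cycleOf a).IsCycle := isCycle_cycleOf σ h1
    have : orderOf (σ.cycleOf a) = 2 := by rw [hcy.orderOf, hc]
    have h2 : (σ.cycleOf a) ^ 2 = 1 := by rw [← this]; exact pow_orderOf_eq_one _
    have := congrArg (fun τ : Perm α => τ a) h2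
    simpa [cycleOf_pow_apply_self, pow_succ, mul_apply] using this

lemma card_two_cycle_elems (σ : Perm α) :
    (univ.filter fun a => σ a ≠ a ∧ σ (σ a) = a).card = 2 * σ.cycleType.count 2 := by
  classical
  set B := σ.cycleFactorsFinset.filter (fun c => c.support.card = 2) with hB
  have hset : (univ.filter fun a => σ a ≠ a ∧ σ (σ a) = a) = B.biUnion Equiv.Perm.support := by
    ext a
    simp only [Finset.mem_filter, Finset.mem_univ, true_and, Finset.mem_biUnion, hB]
    constructor
    · intro h
      obtain ⟨ha, hc⟩ := two_cycle_iff.1 h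
      refine ⟨σ.cycleOf a, ⟨cycleOf_mem_cycleFactorsFinset_iff.2 ha, hc⟩, ?_⟩
      rw [mem_support_cycleOf_iff]
      exact ⟨SameCycle.refl _ _, ha⟩
    · rintro ⟨c, hc, hac⟩
      obtain ⟨hcf, hcard⟩ := hc
      have hco : c = σ.cycleOf a := cycle_is_cycleOf hac hcf
      have ha : a ∈ σ.support := by
        rw [← cycleOf_mem_cycleFactorsFinset_iff, ← hco]; exact hcf
      exact (two_cycle_iff.2 ⟨ha, by rw [← hco]; exact hcard⟩)
  rw [hset, Finset.card_biUnion]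
  · rw [Finset.sum_congr rfl (fun c hc => (Finset.mem_filter.1 hc).2), Finset.sum_const,
      smul_eq_mul, mul_comm]
    congr 1
    rw [cycleType_def, Multiset.count_map]
    simp only [Finset.card, Finset.filter_val, Function.comp_apply]
    congr 1
    apply Multiset.filter_congr
    intro d _
    exact ⟨fun h => h.symm, fun h => h.symm⟩
  · intro c hc d hd hcd
    exact Equiv.Perm.Disjoint.disjoint_support
      ((σ.cycleFactorsFinset_pairwise_disjoint) (Finset.mem_filter.1 hc).1 (Finset.mem_filter.1 hd).1 hcd)

end TwoCycles

lemma mem_conjClass_conj {n : ℕ} {lam : n.Partition} {ω : Equiv.Perm (Fin n)}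
    (σ : Equiv.Perm (Fin n)) (h : ω ∈ conjClass n lam) : σ * ω * σ⁻¹ ∈ conjClass n lam := by
  simp only [conjClass, Finset.mem_filter, Finset.mem_univ, true_and] at *
  rw [cycleType_conj, h]

/-- a permutation sending `a ↦ c`, `b ↦ d`, given `a ≠ b`, `c ≠ d`. -/
lemma exists_perm_two {α : Type*} [DecidableEq α] {a b c d : α} (hab : a ≠ b) (hcd : c ≠ d) :
    ∃ σ : Equiv.Perm α, σ a = c ∧ σ b = d := by
  refine ⟨(Equiv.swap (Equiv.swap a c b) d) * (Equiv.swap a c), ?_, ?_⟩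
  · simp only [Equiv.Perm.mul_apply, Equiv.swap_apply_left]
    apply Equiv.swap_apply_of_ne_of_ne
    · intro h
      have : Equiv.swap a c b = Equiv.swap a c a := by rw [Equiv.swap_apply_left, ← h]
      exact hab ((Equiv.swap a c).injective this).symm
    · exact hcd
  · simp only [Equiv.Perm.mul_apply]
    exact Equiv.swap_apply_left _ _

lemma card_filter_conj {n : ℕ} {lam : n.Partition} (σ : Equiv.Perm (Fin n))
    (P Q : Equiv.Perm (Fin n) → Prop) [DecidablePred P] [DecidablePred Q]
    (h : ∀ ω, P ω ↔ Q (σ * ω * σ⁻¹)) :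
    ((conjClass n lam).filter P).card = ((conjClass n lam).filter Q).card := by
  apply Finset.card_bij' (fun ω _ => σ * ω * σ⁻¹) (fun ω _ => σ⁻¹ * ω * σ)
  · intro ω hω
    obtain ⟨hC, hp⟩ := Finset.mem_filter.1 hω
    exact Finset.mem_filter.2 ⟨mem_conjClass_conj σ hC, (h ω).1 hp⟩
  · intro ω hω
    obtain ⟨hC, hq⟩ := Finset.mem_filter.1 hω
    have hC' : σ⁻¹ * ω * σ ∈ conjClass n lam := by
      simpa using mem_conjClass_conj σ⁻¹ hC
    refine Finset.mem_filter.2 ⟨hC', (h _).2 ?_⟩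
    have : σ * (σ⁻¹ * ω * σ) * σ⁻¹ = ω := by group
    rw [this]; exact hq
  · intro ω _; group
  · intro ω _; group

lemma swap_adj_order {n : ℕ} {p q x y : Fin n} (hq : (q : ℕ) = (p : ℕ) + 1)
    (hxy : x ≠ y) (hF : ¬(x = p ∧ y = q)) (hT : ¬(x = q ∧ y = p)) :
    (Equiv.swap p q x < Equiv.swap p q y ↔ x < y) := by
  have hpq : p ≠ q := by
    intro h; rw [h] at hq; omega
  rw [Equiv.swap_apply_def, Equiv.swap_apply_def]
  have hxy' : (x : ℕ) ≠ (y : ℕ) := fun h => hxy (Fin.ext h)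
  split_ifs <;>
    (simp only [Fin.lt_def, Fin.ext_iff, not_and, ne_eq] at * <;> omega)
lemma descent_count {n : ℕ} (lam : n.Partition) {p q : Fin n} (hq : (q : ℕ) = (p : ℕ) + 1) :
    2 * ((conjClass n lam).filter (fun ω => ω q < ω p)).card
      + ((conjClass n lam).filter (fun ω => ω p = p ∧ ω q = q)).card
    = (conjClass n lam).card + ((conjClass n lam).filter (fun ω => ω p = q ∧ ω q = p)).card := by
  classical
  set C := conjClass n lam with hC
  set D := C.filter (fun ω => ω q < ω p) with hD
  set F := C.filter (fun ω => ω p = p ∧ ω q = q) with hF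
  set T := C.filter (fun ω => ω p = q ∧ ω q = p) with hT
  have hpq : p ≠ q := fun h => by rw [h] at hq; omega
  have hplt : p < q := by rw [Fin.lt_def]; omega
  set σ := Equiv.swap p q with hσ
  have hσp : σ p = q := Equiv.swap_apply_left p q
  have hσq : σ q = p := Equiv.swap_apply_right p q
  have hσinj : Function.Injective σ := σ.injective
  have hTD : T ⊆ D := by
    intro ω hω
    obtain ⟨hωC, h1, h2⟩ := Finset.mem_filter.1 hω
    exact Finset.mem_filter.2 ⟨hωC, by rw [h1, h2]; exact hplt⟩
  have hFCD : F ⊆ C \ D := by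
    intro ω hω
    obtain ⟨hωC, h1, h2⟩ := Finset.mem_filter.1 hω
    refine Finset.mem_sdiff.2 ⟨hωC, fun hωD => ?_⟩
    have := (Finset.mem_filter.1 hωD).2
    rw [h1, h2] at this
    exact absurd this (not_lt.2 hplt.le)
  have hDC : D ⊆ C := Finset.filter_subset _ _
  -- the involution
  have hφC : ∀ ω ∈ C, σ * ω * σ ∈ C := by
    intro ω hω
    have : σ * ω * σ = σ * ω * σ⁻¹ := by rw [Equiv.swap_inv]
    rw [hC, this]
    exact mem_conjClass_conj σ hω
  have hφp : ∀ ω : Equiv.Perm (Fin n), (σ * ω * σ) p = σ (ω q) := by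
    intro ω; simp [Equiv.Perm.mul_apply, hσp]
  have hφq : ∀ ω : Equiv.Perm (Fin n), (σ * ω * σ) q = σ (ω p) := by
    intro ω; simp [Equiv.Perm.mul_apply, hσq]
  have hφF : ∀ ω : Equiv.Perm (Fin n),
      ((σ * ω * σ) p = p ∧ (σ * ω * σ) q = q) ↔ (ω p = p ∧ ω q = q) := by
    intro ω
    rw [hφp, hφq]
    constructor
    · rintro ⟨h1, h2⟩
      have e1 : ω q = q := hσinj (h1.trans hσq.symm)
      have e2 : ω p = p := hσinj (h2.trans hσp.symm)
      exact ⟨e2, e1⟩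
    · rintro ⟨h1, h2⟩
      rw [h1, h2, hσp, hσq]; exact ⟨rfl, rfl⟩
  have hφT : ∀ ω : Equiv.Perm (Fin n),
      ((σ * ω * σ) p = q ∧ (σ * ω * σ) q = p) ↔ (ω p = q ∧ ω q = p) := by
    intro ω
    rw [hφp, hφq]
    constructor
    · rintro ⟨h1, h2⟩
      have e1 : ω q = p := hσinj (h1.trans hσp.symm)
      have e2 : ω p = q := hσinj (h2.trans hσq.symm)
      exact ⟨e2, e1⟩
    · rintro ⟨h1, h2⟩
      rw [h1, h2, hσp, hσq]; exact ⟨rfl, rfl⟩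
  have hflip : ∀ ω : Equiv.Perm (Fin n), ¬(ω p = p ∧ ω q = q) → ¬(ω p = q ∧ ω q = p) →
      ((σ * ω * σ) q < (σ * ω * σ) p ↔ ¬(ω q < ω p)) := by
    intro ω hF' hT'
    rw [hφp, hφq]
    have hne : ω p ≠ ω q := fun h => hpq (ω.injective h)
    rw [swap_adj_order hq hne hF' hT']
    constructor
    · intro h; exact not_lt.2 h.le
    · intro h; exact (lt_or_gt_of_ne hne).resolve_right (by simpa using h)
  have key : (D \ T).card = ((C \ D) \ F).card := by
    apply Finset.card_bij' (fun ω _ => σ * ω * σ) (fun ω _ => σ * ω * σ)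
    · intro ω hω
      obtain ⟨hωD, hωnT⟩ := Finset.mem_sdiff.1 hω
      obtain ⟨hωC, hωd⟩ := Finset.mem_filter.1 hωD
      have hωnF : ¬(ω p = p ∧ ω q = q) := by
        rintro ⟨h1, h2⟩
        rw [h1, h2] at hωd
        exact absurd hωd (not_lt.2 hplt.le)
      have hωnT' : ¬(ω p = q ∧ ω q = p) := fun h =>
        hωnT (Finset.mem_filter.2 ⟨hωC, h⟩)
      refine Finset.mem_sdiff.2 ⟨Finset.mem_sdiff.2 ⟨hφC ω hωC, fun hcon => ?_⟩, fun hcon => ?_⟩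
      · exact ((hflip ω hωnF hωnT').1 (Finset.mem_filter.1 hcon).2) hωd
      · exact hωnF ((hφF ω).1 (Finset.mem_filter.1 hcon).2)
    · intro ω hω
      obtain ⟨hωCD, hωnF⟩ := Finset.mem_sdiff.1 hω
      obtain ⟨hωC, hωnD⟩ := Finset.mem_sdiff.1 hωCD
      have hωnd : ¬(ω q < ω p) := fun h => hωnD (Finset.mem_filter.2 ⟨hωC, h⟩)
      have hωnF' : ¬(ω p = p ∧ ω q = q) := fun h => hωnF (Finset.mem_filter.2 ⟨hωC, h⟩)
      have hωnT' : ¬(ω p = q ∧ ω q = p) := by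
        rintro ⟨h1, h2⟩
        exact hωnd (by rw [h1, h2]; exact hplt)
      refine Finset.mem_sdiff.2 ⟨Finset.mem_filter.2 ⟨hφC ω hωC, ?_⟩, fun hcon => ?_⟩
      · exact (hflip ω hωnF' hωnT').2 hωnd
      · exact hωnT' ((hφT ω).1 (Finset.mem_filter.1 hcon).2)
    · intro ω _
      have : σ * (σ * ω * σ) * σ = (σ * σ) * ω * (σ * σ) := by group
      rw [this, Equiv.swap_mul_self]; group
    · intro ω _
      have : σ * (σ * ω * σ) * σ = (σ * σ) * ω * (σ * σ) := by group
      rw [this, Equiv.swap_mul_self]; group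
  have h1 : (D \ T).card + T.card = D.card := Finset.card_sdiff_add_card_eq_card hTD
  have h2 : ((C \ D) \ F).card + F.card = (C \ D).card := Finset.card_sdiff_add_card_eq_card hFCD
  have h3 : (C \ D).card + D.card = C.card := by
    rw [Finset.card_sdiff_of_subset hDC]
    exact Nat.sub_add_cancel (Finset.card_le_card hDC)
  omega

lemma conjClass_nonempty (n : ℕ) (lam : n.Partition) : (conjClass n lam).Nonempty := by
  have h : ∃ g : Equiv.Perm (Fin n), g.cycleType = Multiset.filter (fun i => i ≠ 1) lam.parts := by
    rw [Equiv.Perm.exists_with_cycleType_iff]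
    constructor
    · rw [Fintype.card_fin]
      obtain ⟨u, hu⟩ := Multiset.le_iff_exists_add.1 (Multiset.filter_le (fun i => i ≠ 1) lam.parts)
      have hle : (Multiset.filter (fun i => i ≠ 1) lam.parts).sum ≤ lam.parts.sum := by
        conv_rhs => rw [hu]
        rw [Multiset.sum_add]
        exact Nat.le_add_right _ _
      exact hle.trans_eq lam.parts_sum
    · intro a ha
      obtain ⟨ha1, ha2⟩ := Multiset.mem_filter.1 ha
      have := lam.parts_pos ha1
      omega
  obtain ⟨g, hg⟩ := h
  exact ⟨g, Finset.mem_filter.2 ⟨Finset.mem_univ _, hg⟩⟩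

lemma filter_sum_eq (n : ℕ) (lam : n.Partition) :
    (Multiset.filter (fun i => i ≠ 1) lam.parts).sum + Multiset.count 1 lam.parts = n := by
  have h := Multiset.filter_add_not (fun i => i ≠ 1) lam.parts
  have h2 : Multiset.filter (fun i => ¬ i ≠ 1) lam.parts = Multiset.filter (· = 1) lam.parts := by
    apply Multiset.filter_congr
    intro x _
    simp [not_not]
  rw [h2] at h
  have h3 : (Multiset.filter (· = 1) lam.parts).sum = Multiset.count 1 lam.parts := by
    rw [Multiset.filter_eq', Multiset.sum_replicate, smul_eq_mul, mul_one]
  calc (Multiset.filter (fun i => i ≠ 1) lam.parts).sum + Multiset.count 1 lam.parts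
      = (Multiset.filter (fun i => i ≠ 1) lam.parts).sum
        + (Multiset.filter (· = 1) lam.parts).sum := by rw [h3]
    _ = lam.parts.sum := by rw [← Multiset.sum_add, h]
    _ = n := lam.parts_sum

lemma card_fixed_of_mem {n : ℕ} {lam : n.Partition} {ω : Equiv.Perm (Fin n)}
    (h : ω ∈ conjClass n lam) :
    (Finset.univ.filter fun a => ω a = a).card = Multiset.count 1 lam.parts := by
  have hct : ω.cycleType = Multiset.filter (fun i => i ≠ 1) lam.parts :=
    (Finset.mem_filter.1 h).2
  have hsupp : ω.support.card + Multiset.count 1 lam.parts = n := by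
    rw [← Equiv.Perm.sum_cycleType, hct]
    exact filter_sum_eq n lam
  have hcompl : (Finset.univ.filter fun a => ω a = a) = ω.supportᶜ := by
    ext a
    simp [Equiv.Perm.mem_support]
  rw [hcompl, Finset.card_compl, Fintype.card_fin]
  omega

lemma sum_card_filter_comm {β γ : Type*} (s : Finset β) (t : Finset γ) (P : β → γ → Prop)
    [∀ b c, Decidable (P b c)] :
    ∑ b ∈ s, (t.filter (fun c => P b c)).card = ∑ c ∈ t, (s.filter (fun b => P b c)).card := by
  simp only [Finset.card_filter]
  exact Finset.sum_comm

lemma offDiag_fix_card {n : ℕ} (ω : Equiv.Perm (Fin n)) :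
    ((Finset.univ : Finset (Fin n)).offDiag.filter fun x => ω x.1 = x.1 ∧ ω x.2 = x.2).card
      = (Finset.univ.filter fun a => ω a = a).card * (Finset.univ.filter fun a => ω a = a).card
        - (Finset.univ.filter fun a => ω a = a).card := by
  rw [← Finset.offDiag_card]
  congr 1
  ext ⟨a, b⟩
  simp only [Finset.mem_filter, Finset.mem_offDiag, Finset.mem_univ, true_and]
  tauto

lemma offDiag_swap_card {n : ℕ} (ω : Equiv.Perm (Fin n)) :
    ((Finset.univ : Finset (Fin n)).offDiag.filter fun x => ω x.1 = x.2 ∧ ω x.2 = x.1).card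
      = (Finset.univ.filter fun a => ω a ≠ a ∧ ω (ω a) = a).card := by
  apply Finset.card_bij (fun x _ => x.1)
  · rintro ⟨a, b⟩ hx
    obtain ⟨hod, h1, h2⟩ := Finset.mem_filter.1 hx
    have hab : a ≠ b := (Finset.mem_offDiag.1 hod).2.2
    refine Finset.mem_filter.2 ⟨Finset.mem_univ _, ?_, ?_⟩
    · rw [h1]; exact hab.symm
    · rw [h1]; exact h2
  · rintro ⟨a, b⟩ hx ⟨c, d⟩ hy hxy
    obtain ⟨-, h1, -⟩ := Finset.mem_filter.1 hx
    obtain ⟨-, h3, -⟩ := Finset.mem_filter.1 hy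
    simp only at hxy h1 h3
    subst hxy
    have : b = d := by rw [← h1, ← h3]
    simp [this]
  · intro a ha
    obtain ⟨-, h1, h2⟩ := Finset.mem_filter.1 ha
    refine ⟨(a, ω a), Finset.mem_filter.2 ⟨Finset.mem_offDiag.2 ⟨Finset.mem_univ _,
      Finset.mem_univ _, Ne.symm h1⟩, rfl, h2⟩, rfl⟩

lemma fix_transport {n : ℕ} {lam : n.Partition} {a b c d : Fin n} (hab : a ≠ b) (hcd : c ≠ d) :
    ((conjClass n lam).filter fun ω => ω a = a ∧ ω b = b).card
      = ((conjClass n lam).filter fun ω => ω c = c ∧ ω d = d).card := by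
  obtain ⟨σ, h1, h2⟩ := exists_perm_two hab hcd
  apply card_filter_conj σ
  intro ω
  have e1 : σ⁻¹ c = a := by rw [← h1]; simp
  have e2 : σ⁻¹ d = b := by rw [← h2]; simp
  simp only [Equiv.Perm.mul_apply, e1, e2]
  rw [← h1, ← h2]
  constructor
  · rintro ⟨r1, r2⟩; rw [r1, r2]; exact ⟨rfl, rfl⟩
  · rintro ⟨r1, r2⟩; exact ⟨σ.injective r1, σ.injective r2⟩

lemma swap_transport {n : ℕ} {lam : n.Partition} {a b c d : Fin n} (hab : a ≠ b) (hcd : c ≠ d) :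
    ((conjClass n lam).filter fun ω => ω a = b ∧ ω b = a).card
      = ((conjClass n lam).filter fun ω => ω c = d ∧ ω d = c).card := by
  obtain ⟨σ, h1, h2⟩ := exists_perm_two hab hcd
  apply card_filter_conj σ
  intro ω
  have e1 : σ⁻¹ c = a := by rw [← h1]; simp
  have e2 : σ⁻¹ d = b := by rw [← h2]; simp
  simp only [Equiv.Perm.mul_apply, e1, e2]
  rw [← h1, ← h2]
  constructor
  · rintro ⟨r1, r2⟩; rw [r1, r2]; exact ⟨rfl, rfl⟩
  · rintro ⟨r1, r2⟩; exact ⟨σ.injective r1, σ.injective r2⟩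

lemma card_twocycle_of_mem {n : ℕ} {lam : n.Partition} {ω : Equiv.Perm (Fin n)}
    (h : ω ∈ conjClass n lam) :
    (Finset.univ.filter fun a => ω a ≠ a ∧ ω (ω a) = a).card
      = 2 * Multiset.count 2 lam.parts := by
  rw [card_two_cycle_elems]
  congr 1
  rw [(Finset.mem_filter.1 h).2, Multiset.count_filter]
  simp

lemma identA {n : ℕ} {lam : n.Partition} {p q : Fin n} (hpq : p ≠ q) :
    (n * n - n) * ((conjClass n lam).filter fun ω => ω p = p ∧ ω q = q).card
      = (Multiset.count 1 lam.parts * Multiset.count 1 lam.parts - Multiset.count 1 lam.parts)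
        * (conjClass n lam).card := by
  have h1 : ∑ x ∈ (Finset.univ : Finset (Fin n)).offDiag,
      ((conjClass n lam).filter fun ω => ω x.1 = x.1 ∧ ω x.2 = x.2).card
      = (n * n - n) * ((conjClass n lam).filter fun ω => ω p = p ∧ ω q = q).card := by
    rw [Finset.sum_congr rfl (fun x hx => fix_transport (Finset.mem_offDiag.1 hx).2.2 hpq),
      Finset.sum_const, smul_eq_mul, Finset.offDiag_card, Finset.card_univ, Fintype.card_fin]
  rw [← h1, sum_card_filter_comm]
  rw [Finset.sum_congr rfl (fun ω hω => by
    rw [offDiag_fix_card ω, card_fixed_of_mem hω]), Finset.sum_const, smul_eq_mul, mul_comm]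

lemma identB {n : ℕ} {lam : n.Partition} {p q : Fin n} (hpq : p ≠ q) :
    (n * n - n) * ((conjClass n lam).filter fun ω => ω p = q ∧ ω q = p).card
      = (2 * Multiset.count 2 lam.parts) * (conjClass n lam).card := by
  have h1 : ∑ x ∈ (Finset.univ : Finset (Fin n)).offDiag,
      ((conjClass n lam).filter fun ω => ω x.1 = x.2 ∧ ω x.2 = x.1).card
      = (n * n - n) * ((conjClass n lam).filter fun ω => ω p = q ∧ ω q = p).card := by
    rw [Finset.sum_congr rfl (fun x hx => swap_transport (Finset.mem_offDiag.1 hx).2.2 hpq),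
      Finset.sum_const, smul_eq_mul, Finset.offDiag_card, Finset.card_univ, Fintype.card_fin]
  rw [← h1, sum_card_filter_comm]
  rw [Finset.sum_congr rfl (fun ω hω => by
    rw [offDiag_swap_card ω, card_twocycle_of_mem hω]), Finset.sum_const, smul_eq_mul, mul_comm]

theorem stmt6 (n : ℕ) (hn : 2 ≤ n) (lam : n.Partition) (a1 a2 : ℕ)
    (ha1 : a1 = Multiset.count 1 lam.parts) (ha2 : a2 = Multiset.count 2 lam.parts) :
    (∑ ω ∈ conjClass n lam, (maj ω : ℝ)) / ((conjClass n lam).card : ℝ)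
      = ((n : ℝ) ^ 2 - (n : ℝ) + 2 * (a2 : ℝ) - (a1 : ℝ) ^ 2 + (a1 : ℝ)) / 4 := by
  classical
  set C := conjClass n lam with hC
  have hp0 : 0 < n := by omega
  have hq0 : 1 < n := by omega
  set p0 : Fin n := ⟨0, hp0⟩ with hp0def
  set q0 : Fin n := ⟨1, hq0⟩ with hq0def
  have hp0q0 : p0 ≠ q0 := by simp [hp0def, hq0def, Fin.ext_iff]
  set f0 := (C.filter fun ω => ω p0 = p0 ∧ ω q0 = q0).card with hf0
  set t0 := (C.filter fun ω => ω p0 = q0 ∧ ω q0 = p0).card with ht0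
  set c := C.card with hc
  set s := ∑ ω ∈ C, maj ω with hs
  set V := (Finset.univ : Finset (Fin n)).filter (fun i : Fin n => (i : ℕ) + 1 < n) with hV
  set d := fun i : Fin n => (C.filter fun ω => ω (succMod i) < ω i).card with hd
  -- Step 1 : s = ∑ i ∈ V, (i+1) * d i
  have step1 : s = ∑ i ∈ V, (((i : ℕ) + 1) * d i) := by
    rw [hs]
    have hmaj : ∀ ω : Equiv.Perm (Fin n), maj ω
        = ∑ i : Fin n, if ((i : ℕ) + 1 < n ∧ ω (succMod i) < ω i) then (i : ℕ) + 1 else 0 :=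
      fun ω => Finset.sum_filter _ _
    rw [Finset.sum_congr rfl fun ω _ => hmaj ω, Finset.sum_comm]
    rw [hV, Finset.sum_filter]
    apply Finset.sum_congr rfl
    intro i _
    by_cases hA : (i : ℕ) + 1 < n
    · simp only [hA, true_and, if_true]
      rw [← Finset.sum_filter, Finset.sum_const, smul_eq_mul, hd, mul_comm]
    · simp only [hA, false_and, if_false, Finset.sum_const_zero]
  -- Step 2 : ∀ i ∈ V, 2 * d i + f0 = c + t0
  have step2 : ∀ i ∈ V, 2 * d i + f0 = c + t0 := by
    intro i hi
    have hA : (i : ℕ) + 1 < n := (Finset.mem_filter.1 hi).2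
    have hqv : ((succMod i : Fin n) : ℕ) = (i : ℕ) + 1 := by
      simp [succMod, Nat.mod_eq_of_lt hA]
    have hiq : i ≠ succMod i := by
      intro h
      have := congrArg (Fin.val) h
      omega
    have hdc := descent_count lam (p := i) (q := succMod i) hqv
    rw [hf0, ht0, fix_transport hp0q0 hiq, swap_transport hp0q0 hiq, hc]
    rw [hd]
    exact hdc
  -- Step 3 : W and its value
  set W := ∑ i ∈ V, ((i : ℕ) + 1) with hW
  obtain ⟨m, rfl⟩ : ∃ m, n = m + 1 := ⟨n - 1, by omega⟩
  have hWval : 2 * W = (m + 1) * (m + 1) - (m + 1) := by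
    have h1 : W = ∑ k ∈ Finset.range (m + 1), (if k + 1 < m + 1 then k + 1 else 0) := by
      rw [hW, hV, Finset.sum_filter]
      exact Fin.sum_univ_eq_sum_range (fun k => if k + 1 < m + 1 then k + 1 else 0) (m + 1)
    have h2 : ∑ k ∈ Finset.range (m + 1), (if k + 1 < m + 1 then k + 1 else 0)
        = ∑ k ∈ Finset.range m, (k + 1) := by
      rw [← Finset.sum_filter]
      apply Finset.sum_congr _ (fun _ _ => rfl)
      ext k
      simp only [Finset.mem_filter, Finset.mem_range]
      omega
    have h3 : ∑ k ∈ Finset.range m, (k + 1) = ∑ k ∈ Finset.range (m + 1), k := by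
      rw [Finset.sum_range_succ' (fun k => k)]
      simp
    rw [h1, h2, h3, mul_comm, Finset.sum_range_id_mul_two (m + 1)]
    simp only [Nat.add_sub_cancel]
    rw [Nat.mul_succ, Nat.add_sub_cancel]
  -- Step 4
  have step4 : 2 * s + W * f0 = W * (c + t0) := by
    have e1 : ∑ i ∈ V, (((i : ℕ) + 1) * (2 * d i + f0)) = ∑ i ∈ V, (((i : ℕ) + 1) * (c + t0)) :=
      Finset.sum_congr rfl (fun i hi => by rw [step2 i hi])
    have e2 : ∑ i ∈ V, (((i : ℕ) + 1) * (2 * d i + f0)) = 2 * s + W * f0 := by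
      rw [step1, hW, Finset.mul_sum, Finset.sum_mul, ← Finset.sum_add_distrib]
      apply Finset.sum_congr rfl
      intro i _
      ring
    calc 2 * s + W * f0 = ∑ i ∈ V, (((i : ℕ) + 1) * (2 * d i + f0)) := e2.symm
      _ = ∑ i ∈ V, (((i : ℕ) + 1) * (c + t0)) := e1
      _ = W * (c + t0) := by rw [hW, Finset.sum_mul]
  -- Step 5 : the ℕ identity
  have idA := identA (lam := lam) hp0q0
  have idB := identB (lam := lam) hp0q0
  rw [← hC, ← hf0, ← hc, ← ha1] at idA
  rw [← hC, ← ht0, ← hc, ← ha2] at idB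
  have star : 4 * s + (a1 * a1 - a1) * c
      = ((m + 1) * (m + 1) - (m + 1)) * c + (2 * a2) * c := by
    have dbl : 4 * s + (2 * W) * f0 = (2 * W) * c + (2 * W) * t0 := by
      calc 4 * s + (2 * W) * f0 = 2 * (2 * s + W * f0) := by ring
        _ = 2 * (W * (c + t0)) := by rw [step4]
        _ = (2 * W) * c + (2 * W) * t0 := by ring
    rw [hWval, idA, idB] at dbl
    exact dbl
  -- Step 6 : pass to ℝ
  have hcpos : 0 < c := by
    rw [hc, hC]
    exact Finset.card_pos.2 (conjClass_nonempty _ _)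
  have hle1 : a1 ≤ a1 * a1 := by
    rcases Nat.eq_zero_or_pos a1 with h | h
    · simp [h]
    · calc a1 = a1 * 1 := (mul_one _).symm
        _ ≤ a1 * a1 := Nat.mul_le_mul_left _ h
  have hle2 : m + 1 ≤ (m + 1) * (m + 1) := by
    calc m + 1 = (m + 1) * 1 := (mul_one _).symm
      _ ≤ (m + 1) * (m + 1) := Nat.mul_le_mul_left _ (by omega)
  have starR := congrArg (Nat.cast : ℕ → ℝ) star
  push_cast [Nat.cast_sub hle1, Nat.cast_sub hle2] at starR
  have hsum : ∑ ω ∈ C, ((maj ω : ℝ)) = (s : ℝ) := by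
    rw [hs, Nat.cast_sum]
  rw [hsum, div_eq_div_iff (by exact_mod_cast hcpos.ne') (by norm_num : (4:ℝ) ≠ 0)]
  push_cast
  linear_combination starR
end

section
/- Let n ≥ 3 and let λ be a partition of n with a_k parts equal to k. The average number of inversions over the conjugacy class C_λ equals (3n² − n + 2a_2 − a_1² + a_1 − 2n·a_1)/12. -/
/-- The number of inversions of a permutation: pairs `(i, j)` with `i < j` and
`ω i > ω j`. -/
def invStat {n : ℕ} (ω : Equiv.Perm (Fin n)) : ℕ :=
  (Finset.univ.filter fun p : Fin n × Fin n => p.1 < p.2 ∧ ω p.2 < ω p.1).card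

open Finset Equiv Equiv.Perm

variable {n : ℕ}


/-- translating the counting predicate by right multiplication preserves cardinality -/
lemma card_filter_mulRight (P : Perm (Fin n) → Prop) [DecidablePred P] (π : Perm (Fin n)) :
    (univ.filter fun σ => P (σ * π)).card = (univ.filter P).card := by
  apply Finset.card_nbij' (i := fun σ => σ * π) (j := fun τ => τ * π⁻¹) <;>
    simp [Set.MapsTo, Set.LeftInvOn, Set.RightInvOn, Finset.mem_filter, mul_assoc]

lemma two_mul_card_lt (a b : Fin n) (hab : a ≠ b) :
    2 * (univ.filter fun σ : Perm (Fin n) => σ a < σ b).card = (univ : Finset (Perm (Fin n))).card := by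
  have h1 := card_filter_mulRight (fun σ : Perm (Fin n) => σ a < σ b) (Equiv.swap a b)
  simp only [Equiv.Perm.mul_apply, Equiv.swap_apply_left, Equiv.swap_apply_right] at h1
  have he : (univ.filter fun σ : Perm (Fin n) => ¬ σ b < σ a)
      = univ.filter fun σ : Perm (Fin n) => σ a < σ b := by
    apply Finset.filter_congr
    intro σ _
    have hne : σ a ≠ σ b := fun h => hab (σ.injective h)
    simp only [not_lt]
    exact ⟨fun h => lt_of_le_of_ne h hne, le_of_lt⟩
  have h2 := Finset.card_filter_add_card_filter_not (s := (univ : Finset (Perm (Fin n)))) (p := fun σ : Perm (Fin n) => σ b < σ a)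
  rw [he] at h2
  omega

/-- number of permutations with `σ x < σ y < σ z` -/
def ordCount (n : ℕ) (x y z : Fin n) : ℕ :=
  (univ.filter fun σ : Perm (Fin n) => σ x < σ y ∧ σ y < σ z).card

lemma ordCount_relabel (a b c : Fin n) (π : Perm (Fin n)) :
    ordCount n (π a) (π b) (π c) = ordCount n a b c := by
  have := card_filter_mulRight (fun σ : Perm (Fin n) => σ a < σ b ∧ σ b < σ c) π
  simp only [ordCount, Equiv.Perm.mul_apply] at this ⊢
  convert this
  rfl

lemma six_mul_ordCount (a b c : Fin n) (hab : a ≠ b) (hac : a ≠ c) (hbc : b ≠ c) :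
    6 * ordCount n a b c = (univ : Finset (Perm (Fin n))).card := by
  have s1 : Equiv.swap a b c = c := Equiv.swap_apply_of_ne_of_ne hac.symm hbc.symm
  have s2 : Equiv.swap b c a = a := Equiv.swap_apply_of_ne_of_ne hab hac
  have s3 : Equiv.swap a c b = b := Equiv.swap_apply_of_ne_of_ne hab.symm hbc
  have e1 := ordCount_relabel a b c (Equiv.swap a b)
  have e2 := ordCount_relabel a b c (Equiv.swap b c)
  have e3 := ordCount_relabel a b c (Equiv.swap a c)
  have e4 := ordCount_relabel a b c (Equiv.swap a b * Equiv.swap a c)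
  have e5 := ordCount_relabel a b c (Equiv.swap a c * Equiv.swap a b)
  simp only [Equiv.Perm.mul_apply, Equiv.swap_apply_left, Equiv.swap_apply_right,
    s1, s2, s3] at e1 e2 e3 e4 e5
  have hpart : (univ : Finset (Perm (Fin n))).card
      = ordCount n a b c + ordCount n b a c + ordCount n a c b + ordCount n c b a
        + ordCount n c a b + ordCount n b c a := by
    simp only [ordCount, Finset.card_filter]
    rw [Finset.card_eq_sum_ones, ← Finset.sum_add_distrib, ← Finset.sum_add_distrib,
      ← Finset.sum_add_distrib, ← Finset.sum_add_distrib, ← Finset.sum_add_distrib]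
    apply Finset.sum_congr rfl
    intro σ _
    have h1 : σ a ≠ σ b := fun h => hab (σ.injective h)
    have h2 : σ a ≠ σ c := fun h => hac (σ.injective h)
    have h3 : σ b ≠ σ c := fun h => hbc (σ.injective h)
    split_ifs <;> omega
  omega

lemma three_mul_card_min (a b c : Fin n) (hab : a ≠ b) (hac : a ≠ c) (hbc : b ≠ c) :
    3 * (univ.filter fun σ : Perm (Fin n) => σ a < σ b ∧ σ a < σ c).card
      = (univ : Finset (Perm (Fin n))).card := by
  have hsplit : (univ.filter fun σ : Perm (Fin n) => σ a < σ b ∧ σ a < σ c).card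
      = ordCount n a b c + ordCount n a c b := by
    simp only [ordCount, Finset.card_filter]
    rw [← Finset.sum_add_distrib]
    apply Finset.sum_congr rfl
    intro σ _
    have h1 : σ a ≠ σ b := fun h => hab (σ.injective h)
    have h2 : σ a ≠ σ c := fun h => hac (σ.injective h)
    have h3 : σ b ≠ σ c := fun h => hbc (σ.injective h)
    split_ifs <;> omega
  have h1 := six_mul_ordCount a b c hab hac hbc
  have h2 := six_mul_ordCount a c b hac hab hbc.symm
  omega

lemma three_mul_card_max (a b c : Fin n) (hab : a ≠ b) (hac : a ≠ c) (hbc : b ≠ c) :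
    3 * (univ.filter fun σ : Perm (Fin n) => σ a < σ c ∧ σ b < σ c).card
      = (univ : Finset (Perm (Fin n))).card := by
  have hsplit : (univ.filter fun σ : Perm (Fin n) => σ a < σ c ∧ σ b < σ c).card
      = ordCount n a b c + ordCount n b a c := by
    simp only [ordCount, Finset.card_filter]
    rw [← Finset.sum_add_distrib]
    apply Finset.sum_congr rfl
    intro σ _
    have h1 : σ a ≠ σ b := fun h => hab (σ.injective h)
    have h2 : σ a ≠ σ c := fun h => hac (σ.injective h)
    have h3 : σ b ≠ σ c := fun h => hbc (σ.injective h)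
    split_ifs <;> omega
  have h1 := six_mul_ordCount a b c hab hac hbc
  have h2 := six_mul_ordCount b a c hab.symm hbc hac
  omega

/-- number of permutations with `σ a < σ b` and `σ c < σ d` -/
def pairCount (n : ℕ) (a b c d : Fin n) : ℕ :=
  (univ.filter fun σ : Perm (Fin n) => σ a < σ b ∧ σ c < σ d).card

lemma pairCount_relabel (a b c d : Fin n) (π : Perm (Fin n)) :
    pairCount n (π a) (π b) (π c) (π d) = pairCount n a b c d := by
  have := card_filter_mulRight (fun σ : Perm (Fin n) => σ a < σ b ∧ σ c < σ d) π
  simp only [pairCount, Equiv.Perm.mul_apply] at this ⊢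
  convert this
  rfl

lemma four_mul_pairCount (a b c d : Fin n) (hab : a ≠ b) (hcd : c ≠ d)
    (hac : a ≠ c) (had : a ≠ d) (hbc : b ≠ c) (hbd : b ≠ d) :
    4 * pairCount n a b c d = (univ : Finset (Perm (Fin n))).card := by
  have s1 : Equiv.swap a b c = c := Equiv.swap_apply_of_ne_of_ne hac.symm hbc.symm
  have s2 : Equiv.swap a b d = d := Equiv.swap_apply_of_ne_of_ne had.symm hbd.symm
  have s3 : Equiv.swap c d a = a := Equiv.swap_apply_of_ne_of_ne hac had
  have s4 : Equiv.swap c d b = b := Equiv.swap_apply_of_ne_of_ne hbc hbd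
  have e1 := pairCount_relabel a b c d (Equiv.swap a b)
  have e2 := pairCount_relabel a b c d (Equiv.swap c d)
  have e3 := pairCount_relabel a b c d (Equiv.swap a b * Equiv.swap c d)
  simp only [Equiv.Perm.mul_apply, Equiv.swap_apply_left, Equiv.swap_apply_right,
    s1, s2, s3, s4] at e1 e2 e3
  have hpart : (univ : Finset (Perm (Fin n))).card
      = pairCount n a b c d + pairCount n b a c d + pairCount n a b d c
        + pairCount n b a d c := by
    simp only [pairCount, Finset.card_filter]
    rw [Finset.card_eq_sum_ones, ← Finset.sum_add_distrib, ← Finset.sum_add_distrib,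
      ← Finset.sum_add_distrib]
    apply Finset.sum_congr rfl
    intro σ _
    have h1 : σ a ≠ σ b := fun h => hab (σ.injective h)
    have h2 : σ c ≠ σ d := fun h => hcd (σ.injective h)
    split_ifs <;> omega
  omega

/-- the number of `σ` for which `(σ p.1, σ p.2)` is an "inversion pattern" for `σ ω σ⁻¹` -/
def pairN (n : ℕ) (ω : Perm (Fin n)) (p : Fin n × Fin n) : ℕ :=
  (univ.filter fun σ : Perm (Fin n) => σ p.1 < σ p.2 ∧ σ (ω p.2) < σ (ω p.1)).card

/-- weight of a pair (12 times the probability of inversion) -/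
def wgt (ω : Perm (Fin n)) (p : Fin n × Fin n) : ℕ :=
  if p.1 = p.2 then 0
  else if ω p.1 = p.1 then (if ω p.2 = p.2 then 0 else 2)
  else if ω p.2 = p.2 then 2
  else if ω p.1 = p.2 then (if ω p.2 = p.1 then 6 else 4)
  else if ω p.2 = p.1 then 4
  else 3

lemma twelve_mul_pairN (ω : Perm (Fin n)) (p : Fin n × Fin n) :
    12 * pairN n ω p = wgt ω p * (univ : Finset (Perm (Fin n))).card := by
  obtain ⟨a, b⟩ := p
  simp only [pairN, wgt]
  by_cases hab : a = b
  · simp [hab]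
  simp only [if_neg hab]
  by_cases h1 : ω a = a
  · by_cases h2 : ω b = b
    · simp only [if_pos h1, if_pos h2, zero_mul]
      simp only [h1, h2]
      have hemp : (univ.filter fun σ : Perm (Fin n) => σ a < σ b ∧ σ b < σ a) = ∅ := by
        rw [Finset.filter_eq_empty_iff]
        intro σ _
        omega
      rw [hemp]
      simp
    · -- a fixed, b moved : pattern σ (ω b) < σ a < σ b
      have hca : ω b ≠ a := fun h => hab (ω.injective (h1.trans h.symm))
      have heq : (univ.filter fun σ : Perm (Fin n) => σ a < σ b ∧ σ (ω b) < σ (ω a)).card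
          = ordCount n (ω b) a b := by
        unfold ordCount
        congr 1
        apply Finset.filter_congr
        intro σ _
        rw [h1]
        constructor <;> exact fun h => ⟨h.2, h.1⟩
      have h6 := six_mul_ordCount (ω b) a b hca h2 hab
      simp only [if_pos h1, if_neg h2]
      omega
  · by_cases h2 : ω b = b
    · -- b fixed, a moved : pattern σ a < σ b < σ (ω a)
      have hcb : ω a ≠ b := fun h => hab (ω.injective (h.trans h2.symm))
      have heq : (univ.filter fun σ : Perm (Fin n) => σ a < σ b ∧ σ (ω b) < σ (ω a)).card
          = ordCount n a b (ω a) := by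
        unfold ordCount
        congr 1
        apply Finset.filter_congr
        intro σ _
        rw [h2]
      have h6 := six_mul_ordCount a b (ω a) hab (Ne.symm h1) hcb.symm
      simp only [if_neg h1, if_pos h2]
      omega
    · by_cases h3 : ω a = b
      · by_cases h4 : ω b = a
        · -- 2-cycle : pattern σ a < σ b
          have heq : (univ.filter fun σ : Perm (Fin n) => σ a < σ b ∧ σ (ω b) < σ (ω a)).card
              = (univ.filter fun σ : Perm (Fin n) => σ a < σ b).card := by
            congr 1
            apply Finset.filter_congr
            intro σ _
            rw [h3, h4]
            exact ⟨fun h => h.1, fun h => ⟨h, h⟩⟩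
          have h2' := two_mul_card_lt a b hab
          simp only [if_neg h1, if_neg h2, if_pos h3, if_pos h4]
          omega
        · -- ω a = b, ω b ≠ a : σ b is the max of σ a, σ (ω b), σ b
          have hcb : ω b ≠ b := h2
          have heq : (univ.filter fun σ : Perm (Fin n) => σ a < σ b ∧ σ (ω b) < σ (ω a)).card
              = (univ.filter fun σ : Perm (Fin n) => σ a < σ b ∧ σ (ω b) < σ b).card := by
            congr 1
            apply Finset.filter_congr
            intro σ _
            rw [h3]
          have h3' := three_mul_card_max a (ω b) b (Ne.symm h4) hab h2
          simp only [if_neg h1, if_neg h2, if_pos h3, if_neg h4]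
          omega
      · by_cases h4 : ω b = a
        · -- ω b = a, ω a ≠ b : σ a is the min
          have hca : ω a ≠ a := h1
          have heq : (univ.filter fun σ : Perm (Fin n) => σ a < σ b ∧ σ (ω b) < σ (ω a)).card
              = (univ.filter fun σ : Perm (Fin n) => σ a < σ b ∧ σ a < σ (ω a)).card := by
            congr 1
            apply Finset.filter_congr
            intro σ _
            rw [h4]
          have h3' := three_mul_card_min a b (ω a) hab (Ne.symm h1) (Ne.symm h3)
          simp only [if_neg h1, if_neg h2, if_neg h3, if_pos h4]
          omega
        · -- generic : four distinct points
          have hdc : ω b ≠ ω a := fun h => hab (ω.injective h).symm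
          have h4' := four_mul_pairCount a b (ω b) (ω a) hab hdc
            (Ne.symm h4) (Ne.symm h1) (Ne.symm h2) (Ne.symm h3)
          simp only [if_neg h1, if_neg h2, if_neg h3, if_neg h4]
          unfold pairCount at h4'
          omega

lemma support_cycleOf_eq_pair (ω : Perm (Fin n)) (x : Fin n) (hx : ω x ≠ x)
    (hx2 : ω (ω x) = x) : (ω.cycleOf x).support = {x, ω x} := by
  ext y
  rw [Equiv.Perm.mem_support_cycleOf_iff]
  constructor
  · rintro ⟨⟨i, hi⟩, -⟩
    have h2 : (ω ^ (2 : ℤ)) x = x := by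
      have : ((2 : ℤ)) = ((2 : ℕ) : ℤ) := by norm_num
      rw [this, zpow_natCast]
      simpa [pow_succ, pow_zero] using hx2
    have hdecomp : (ω ^ i) x = (ω ^ (i % 2)) x := by
      conv_lhs => rw [show i = i % 2 + 2 * (i / 2) by omega]
      rw [zpow_add, Equiv.Perm.mul_apply, zpow_mul]
      rw [Equiv.Perm.zpow_apply_eq_self_of_apply_eq_self h2]
    rcases Int.emod_two_eq i with h | h
    · simp only [Finset.mem_insert, Finset.mem_singleton]
      left
      rw [← hi, hdecomp, h, zpow_zero]
      rfl
    · simp only [Finset.mem_insert, Finset.mem_singleton]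
      right
      rw [← hi, hdecomp, h, zpow_one]
  · intro hy
    simp only [Finset.mem_insert, Finset.mem_singleton] at hy
    refine ⟨?_, Equiv.Perm.mem_support.2 hx⟩
    rcases hy with rfl | rfl
    · exact Equiv.Perm.SameCycle.refl ω y
    · exact ⟨1, by simp⟩

lemma p2_card_eq (ω : Perm (Fin n)) :
    (univ.filter fun x : Fin n => ω x ≠ x ∧ ω (ω x) = x).card
      = 2 * ω.cycleType.count 2 := by
  classical
  set T := ω.cycleFactorsFinset.filter (fun c => c.support.card = 2) with hT
  have hcount : ω.cycleType.count 2 = T.card := by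
    rw [Equiv.Perm.cycleType_def, Multiset.count_map]
    have hpred : Multiset.filter (fun a : Perm (Fin n) => 2 = (Finset.card ∘ Equiv.Perm.support) a)
          ω.cycleFactorsFinset.val
        = Multiset.filter (fun c : Perm (Fin n) => c.support.card = 2) ω.cycleFactorsFinset.val :=
      Multiset.filter_congr (fun c _ => by simp [Function.comp, eq_comm])
    rw [hpred, hT]
    rfl
  have hset : (univ.filter fun x : Fin n => ω x ≠ x ∧ ω (ω x) = x)
      = T.biUnion Equiv.Perm.support := by
    ext x
    simp only [Finset.mem_filter, Finset.mem_univ, true_and, Finset.mem_biUnion, hT]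
    constructor
    · rintro ⟨hx, hx2⟩
      refine ⟨ω.cycleOf x, ?_, ?_⟩
      · refine ⟨Equiv.Perm.cycleOf_mem_cycleFactorsFinset_iff.2 (Equiv.Perm.mem_support.2 hx), ?_⟩
        rw [support_cycleOf_eq_pair ω x hx hx2]
        rw [Finset.card_insert_of_notMem (by simp [Ne.symm hx]), Finset.card_singleton]
      · rw [support_cycleOf_eq_pair ω x hx hx2]
        simp
    · rintro ⟨c, hc, hxc⟩
      obtain ⟨hcf, hc2⟩ := hc
      have hmem := Equiv.Perm.mem_cycleFactorsFinset_iff.1 hcf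
      have hcx : c x = ω x := hmem.2 x hxc
      have hxne : c x ≠ x := Equiv.Perm.mem_support.1 hxc
      have hswap : Equiv.Perm.IsSwap c := Equiv.Perm.card_support_eq_two.1 hc2
      have hcc : c (c x) = x := by
        obtain ⟨u, v, huv, rfl⟩ := hswap
        rcases Equiv.swap_apply_def u v x with _
        by_cases hu : x = u
        · subst hu; rw [Equiv.swap_apply_left, Equiv.swap_apply_right]
        by_cases hv : x = v
        · subst hv; rw [Equiv.swap_apply_right, Equiv.swap_apply_left]
        · rw [Equiv.swap_apply_of_ne_of_ne hu hv] at hxne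
          exact absurd rfl hxne
      have hcx2 : c (ω x) = ω (ω x) := hmem.2 (ω x) (by rw [← hcx]; exact Equiv.Perm.apply_mem_support.2 hxc)
      refine ⟨by rw [← hcx]; exact hxne, ?_⟩
      rw [← hcx2, ← hcx, hcc]
  rw [hset, hcount, Finset.card_biUnion, Finset.sum_congr rfl (fun c hc => (Finset.mem_filter.1 hc).2),
    Finset.sum_const, smul_eq_mul, mul_comm]
  · intro c hc d hd hcd
    exact Equiv.Perm.Disjoint.disjoint_support
      (ω.cycleFactorsFinset_pairwise_disjoint (Finset.mem_filter.1 hc).1 (Finset.mem_filter.1 hd).1 hcd)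

set_option maxHeartbeats 2000000 in
lemma wgt_decomp (ω : Perm (Fin n)) (p : Fin n × Fin n) :
    wgt ω p
      = 6 * (if p.1 ≠ p.2 ∧ ω p.1 = p.2 ∧ ω p.2 = p.1 then 1 else 0)
        + 2 * (if ω p.1 = p.1 ∧ ω p.2 ≠ p.2 then 1 else 0)
        + 2 * (if ω p.1 ≠ p.1 ∧ ω p.2 = p.2 then 1 else 0)
        + 4 * (if ω p.1 = p.2 ∧ ω p.2 ≠ p.1 then 1 else 0)
        + 4 * (if ω p.2 = p.1 ∧ ω p.1 ≠ p.2 then 1 else 0)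
        + 3 * (if p.1 ≠ p.2 ∧ ω p.1 ≠ p.1 ∧ ω p.2 ≠ p.2 ∧ ω p.1 ≠ p.2 ∧ ω p.2 ≠ p.1
            then 1 else 0) := by
  obtain ⟨a, b⟩ := p
  simp only [wgt]
  rcases eq_or_ne a b with rfl | hab
  · split_ifs <;> omega
  · have hinj : ω a ≠ ω b := fun h => hab (ω.injective h)
    split_ifs <;> omega

set_option maxHeartbeats 2000000 in
lemma indicator_partition (ω : Perm (Fin n)) (p : Fin n × Fin n) :
    (if p.1 = p.2 then 1 else 0)
      + (if p.1 ≠ p.2 ∧ ω p.1 = p.1 ∧ ω p.2 = p.2 then 1 else 0)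
      + (if p.1 ≠ p.2 ∧ ω p.1 = p.2 ∧ ω p.2 = p.1 then 1 else 0)
      + (if ω p.1 = p.1 ∧ ω p.2 ≠ p.2 then 1 else 0)
      + (if ω p.1 ≠ p.1 ∧ ω p.2 = p.2 then 1 else 0)
      + (if ω p.1 = p.2 ∧ ω p.2 ≠ p.1 then 1 else 0)
      + (if ω p.2 = p.1 ∧ ω p.1 ≠ p.2 then 1 else 0)
      + (if p.1 ≠ p.2 ∧ ω p.1 ≠ p.1 ∧ ω p.2 ≠ p.2 ∧ ω p.1 ≠ p.2 ∧ ω p.2 ≠ p.1 then 1 else 0)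
      = (1 : ℕ) := by
  obtain ⟨a, b⟩ := p
  simp only []
  rcases eq_or_ne a b with rfl | hab
  · split_ifs <;> omega
  · have hinj : ω a ≠ ω b := fun h => hab (ω.injective h)
    split_ifs <;> omega

lemma card_pairs_fix_move (ω : Perm (Fin n)) :
    (univ.filter fun p : Fin n × Fin n => ω p.1 = p.1 ∧ ω p.2 ≠ p.2).card
      = (univ.filter fun x : Fin n => ω x = x).card
          * (univ.filter fun x : Fin n => ω x ≠ x).card := by
  rw [← Finset.univ_product_univ,
    Finset.filter_product (p := fun a : Fin n => ω a = a) (q := fun b : Fin n => ω b ≠ b),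
    Finset.card_product]

lemma card_pairs_move_fix (ω : Perm (Fin n)) :
    (univ.filter fun p : Fin n × Fin n => ω p.1 ≠ p.1 ∧ ω p.2 = p.2).card
      = (univ.filter fun x : Fin n => ω x ≠ x).card
          * (univ.filter fun x : Fin n => ω x = x).card := by
  rw [← Finset.univ_product_univ,
    Finset.filter_product (p := fun a : Fin n => ω a ≠ a) (q := fun b : Fin n => ω b = b),
    Finset.card_product]

lemma card_pairs_fix_fix (ω : Perm (Fin n)) :
    (univ.filter fun p : Fin n × Fin n => ω p.1 = p.1 ∧ ω p.2 = p.2).card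
      = (univ.filter fun x : Fin n => ω x = x).card
          * (univ.filter fun x : Fin n => ω x = x).card := by
  rw [← Finset.univ_product_univ,
    Finset.filter_product (p := fun a : Fin n => ω a = a) (q := fun b : Fin n => ω b = b),
    Finset.card_product]

lemma card_pairs_twocycle (ω : Perm (Fin n)) :
    (univ.filter fun p : Fin n × Fin n => p.1 ≠ p.2 ∧ ω p.1 = p.2 ∧ ω p.2 = p.1).card
      = (univ.filter fun x : Fin n => ω x ≠ x ∧ ω (ω x) = x).card := by
  symm
  apply Finset.card_nbij' (i := fun x => (x, ω x)) (j := fun p => p.1)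
  · intro x hx
    simp only [Finset.mem_coe, Finset.mem_filter, Finset.mem_univ, true_and] at hx ⊢
    exact ⟨Ne.symm hx.1, hx.2⟩
  · rintro ⟨a, b⟩ hp
    simp only [Finset.mem_coe, Finset.mem_filter, Finset.mem_univ, true_and] at hp ⊢
    refine ⟨fun h => hp.1 ?_, ?_⟩
    · rw [← hp.2.1, h]
    · rw [hp.2.1, hp.2.2]
  · intro x _; rfl
  · rintro ⟨a, b⟩ hp
    simp only [Finset.mem_coe, Finset.mem_filter, Finset.mem_univ, true_and] at hp
    show (a, ω a) = (a, b)
    rw [hp.2.1]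

lemma card_pairs_five (ω : Perm (Fin n)) :
    (univ.filter fun p : Fin n × Fin n => ω p.1 = p.2 ∧ ω p.2 ≠ p.1).card
      = (univ.filter fun x : Fin n => ω (ω x) ≠ x).card := by
  symm
  apply Finset.card_nbij' (i := fun x => (x, ω x)) (j := fun p => p.1)
  · intro x hx
    simp only [Finset.mem_coe, Finset.mem_filter, Finset.mem_univ, true_and] at hx ⊢
    exact hx
  · rintro ⟨a, b⟩ hp
    simp only [Finset.mem_coe, Finset.mem_filter, Finset.mem_univ, true_and] at hp ⊢
    show ω (ω a) ≠ a
    rw [hp.1]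
    exact hp.2
  · intro x _; rfl
  · rintro ⟨a, b⟩ hp
    simp only [Finset.mem_coe, Finset.mem_filter, Finset.mem_univ, true_and] at hp
    show (a, ω a) = (a, b)
    rw [hp.1]

lemma card_pairs_six (ω : Perm (Fin n)) :
    (univ.filter fun p : Fin n × Fin n => ω p.2 = p.1 ∧ ω p.1 ≠ p.2).card
      = (univ.filter fun x : Fin n => ω (ω x) ≠ x).card := by
  symm
  apply Finset.card_nbij' (i := fun x => (ω x, x)) (j := fun p => p.2)
  · intro x hx
    simp only [Finset.mem_coe, Finset.mem_filter, Finset.mem_univ, true_and] at hx ⊢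
    exact hx
  · rintro ⟨a, b⟩ hp
    simp only [Finset.mem_coe, Finset.mem_filter, Finset.mem_univ, true_and] at hp ⊢
    show ω (ω b) ≠ b
    rw [hp.1]
    exact hp.2
  · intro x _; rfl
  · rintro ⟨a, b⟩ hp
    simp only [Finset.mem_coe, Finset.mem_filter, Finset.mem_univ, true_and] at hp
    show (ω b, b) = (a, b)
    rw [hp.1]

lemma card_pairs_diag :
    ((univ : Finset (Fin n × Fin n)).filter fun p => p.1 = p.2).card = n := by
  have h : ((univ : Finset (Fin n)).card)
      = ((univ : Finset (Fin n × Fin n)).filter fun p => p.1 = p.2).card := by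
    apply Finset.card_nbij' (i := fun x => (x, x)) (j := fun p => p.1)
    · intro x _; simp
    · intro p _; simp
    · intro x _; rfl
    · rintro ⟨a, b⟩ hp
      simp only [Finset.mem_coe, Finset.mem_filter, Finset.mem_univ, true_and] at hp
      show (a, a) = (a, b)
      rw [hp]
  rw [← h, Finset.card_univ, Fintype.card_fin]

lemma card_pairs_diag_fix (ω : Perm (Fin n)) :
    ((univ : Finset (Fin n × Fin n)).filter fun p => p.1 = p.2 ∧ ω p.1 = p.1 ∧ ω p.2 = p.2).card
      = (univ.filter fun x : Fin n => ω x = x).card := by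
  symm
  apply Finset.card_nbij' (i := fun x => (x, x)) (j := fun p => p.1)
  · intro x hx
    simp only [Finset.mem_coe, Finset.mem_filter, Finset.mem_univ, true_and] at hx ⊢
    exact ⟨hx, hx⟩
  · rintro ⟨a, b⟩ hp
    simp only [Finset.mem_coe, Finset.mem_filter, Finset.mem_univ, true_and] at hp ⊢
    exact hp.2.1
  · intro x _; rfl
  · rintro ⟨a, b⟩ hp
    simp only [Finset.mem_coe, Finset.mem_filter, Finset.mem_univ, true_and] at hp
    show (a, a) = (a, b)
    rw [← hp.1]

lemma sum_wgt (ω : Perm (Fin n)) :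
    (∑ p : Fin n × Fin n, wgt ω p)
        + 3 * n
        + 3 * ((univ.filter fun x : Fin n => ω x = x).card
            * (univ.filter fun x : Fin n => ω x = x).card)
        + ((univ.filter fun x : Fin n => ω x = x).card
            * (univ.filter fun x : Fin n => ω x ≠ x).card)
        + ((univ.filter fun x : Fin n => ω x ≠ x).card
            * (univ.filter fun x : Fin n => ω x = x).card)
      = 3 * (n * n) + 3 * (univ.filter fun x : Fin n => ω x = x).card
        + 3 * (univ.filter fun x : Fin n => ω x ≠ x ∧ ω (ω x) = x).card
        + 2 * (univ.filter fun x : Fin n => ω (ω x) ≠ x).card := by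
  classical
  have hdecomp : (∑ p : Fin n × Fin n, wgt ω p)
      = 6 * (univ.filter fun p : Fin n × Fin n => p.1 ≠ p.2 ∧ ω p.1 = p.2 ∧ ω p.2 = p.1).card
        + 2 * (univ.filter fun p : Fin n × Fin n => ω p.1 = p.1 ∧ ω p.2 ≠ p.2).card
        + 2 * (univ.filter fun p : Fin n × Fin n => ω p.1 ≠ p.1 ∧ ω p.2 = p.2).card
        + 4 * (univ.filter fun p : Fin n × Fin n => ω p.1 = p.2 ∧ ω p.2 ≠ p.1).card
        + 4 * (univ.filter fun p : Fin n × Fin n => ω p.2 = p.1 ∧ ω p.1 ≠ p.2).card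
        + 3 * (univ.filter fun p : Fin n × Fin n =>
            p.1 ≠ p.2 ∧ ω p.1 ≠ p.1 ∧ ω p.2 ≠ p.2 ∧ ω p.1 ≠ p.2 ∧ ω p.2 ≠ p.1).card := by
    rw [Finset.sum_congr rfl (fun p _ => wgt_decomp ω p)]
    rw [Finset.sum_add_distrib, Finset.sum_add_distrib, Finset.sum_add_distrib,
      Finset.sum_add_distrib, Finset.sum_add_distrib]
    simp only [← Finset.mul_sum, ← Finset.card_filter]
  have hpart : n * n
      = n
        + (univ.filter fun p : Fin n × Fin n => p.1 ≠ p.2 ∧ ω p.1 = p.1 ∧ ω p.2 = p.2).card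
        + (univ.filter fun p : Fin n × Fin n => p.1 ≠ p.2 ∧ ω p.1 = p.2 ∧ ω p.2 = p.1).card
        + (univ.filter fun p : Fin n × Fin n => ω p.1 = p.1 ∧ ω p.2 ≠ p.2).card
        + (univ.filter fun p : Fin n × Fin n => ω p.1 ≠ p.1 ∧ ω p.2 = p.2).card
        + (univ.filter fun p : Fin n × Fin n => ω p.1 = p.2 ∧ ω p.2 ≠ p.1).card
        + (univ.filter fun p : Fin n × Fin n => ω p.2 = p.1 ∧ ω p.1 ≠ p.2).card
        + (univ.filter fun p : Fin n × Fin n =>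
            p.1 ≠ p.2 ∧ ω p.1 ≠ p.1 ∧ ω p.2 ≠ p.2 ∧ ω p.1 ≠ p.2 ∧ ω p.2 ≠ p.1).card := by
    have hcard : (n * n : ℕ) = ∑ _p : Fin n × Fin n, 1 := by
      simp [Finset.card_univ]
    rw [hcard, Finset.sum_congr rfl (fun p _ => (indicator_partition ω p).symm)]
    rw [Finset.sum_add_distrib, Finset.sum_add_distrib, Finset.sum_add_distrib,
      Finset.sum_add_distrib, Finset.sum_add_distrib, Finset.sum_add_distrib,
      Finset.sum_add_distrib]
    simp only [← Finset.card_filter]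
    rw [card_pairs_diag]
  have hsplit : (univ.filter fun p : Fin n × Fin n => ω p.1 = p.1 ∧ ω p.2 = p.2).card
      = ((univ : Finset (Fin n × Fin n)).filter
            fun p => p.1 = p.2 ∧ ω p.1 = p.1 ∧ ω p.2 = p.2).card
        + (univ.filter fun p : Fin n × Fin n => p.1 ≠ p.2 ∧ ω p.1 = p.1 ∧ ω p.2 = p.2).card := by
    simp only [Finset.card_filter, ← Finset.sum_add_distrib]
    apply Finset.sum_congr rfl
    intro p _
    split_ifs <;> omega
  rw [card_pairs_twocycle, card_pairs_five, card_pairs_six] at hdecomp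
  rw [card_pairs_twocycle, card_pairs_five, card_pairs_six] at hpart
  rw [card_pairs_fix_fix, card_pairs_diag_fix] at hsplit
  rw [card_pairs_fix_move, card_pairs_move_fix] at hdecomp hpart
  omega

lemma invStat_conj (ω σ : Perm (Fin n)) :
    invStat (σ * ω * σ⁻¹)
      = (univ.filter fun p : Fin n × Fin n =>
          σ p.1 < σ p.2 ∧ σ (ω p.2) < σ (ω p.1)).card := by
  unfold invStat
  apply Finset.card_nbij' (i := fun p => (σ⁻¹ p.1, σ⁻¹ p.2)) (j := fun p => (σ p.1, σ p.2))
  · rintro ⟨i, j⟩ hp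
    simp only [Finset.mem_coe, Finset.mem_filter, Finset.mem_univ, true_and, Equiv.Perm.mul_apply,
      Equiv.Perm.coe_inv, Equiv.apply_symm_apply, Set.mem_setOf_eq] at hp ⊢
    simpa using (Finset.mem_filter.1 hp).2
  · rintro ⟨a, b⟩ hp
    simp only [Finset.mem_coe, Finset.mem_filter, Finset.mem_univ, true_and, Equiv.Perm.mul_apply,
      Equiv.Perm.coe_inv, Equiv.symm_apply_apply, Set.mem_setOf_eq] at hp ⊢
    refine Finset.mem_filter.2 ⟨Finset.mem_univ _, ?_⟩
    simpa using hp
  · rintro ⟨i, j⟩ _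
    show (σ (σ⁻¹ i), σ (σ⁻¹ j)) = (i, j)
    simp
  · rintro ⟨a, b⟩ _
    show (σ⁻¹ (σ a), σ⁻¹ (σ b)) = (a, b)
    simp

lemma sum_invStat_eq_sum_pairN (ω : Perm (Fin n)) :
    ∑ σ : Perm (Fin n), invStat (σ * ω * σ⁻¹) = ∑ p : Fin n × Fin n, pairN n ω p := by
  simp only [invStat_conj, pairN, Finset.card_filter]
  rw [Finset.sum_comm]

lemma twelve_sum_pairN (ω : Perm (Fin n)) :
    12 * ∑ p : Fin n × Fin n, pairN n ω p
      = (∑ p : Fin n × Fin n, wgt ω p) * (univ : Finset (Perm (Fin n))).card := by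
  rw [Finset.mul_sum, Finset.sum_congr rfl (fun p _ => twelve_mul_pairN ω p), ← Finset.sum_mul]

lemma conj_fiber_const (ω₀ ω : Perm (Fin n)) (h : IsConj ω₀ ω) :
    (univ.filter fun σ : Perm (Fin n) => σ * ω₀ * σ⁻¹ = ω).card
      = (univ.filter fun σ : Perm (Fin n) => σ * ω₀ * σ⁻¹ = ω₀).card := by
  obtain ⟨τ, hτ⟩ := isConj_iff.1 h
  apply Finset.card_nbij' (i := fun σ => τ⁻¹ * σ) (j := fun σ => τ * σ)
  · intro σ hσ
    simp only [Finset.mem_coe, Finset.mem_filter, Finset.mem_univ, true_and] at hσ ⊢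
    have hgrp : (τ⁻¹ * σ) * ω₀ * (τ⁻¹ * σ)⁻¹ = τ⁻¹ * (σ * ω₀ * σ⁻¹) * τ := by group
    rw [hgrp, hσ, ← hτ]
    group
  · intro σ hσ
    simp only [Finset.mem_coe, Finset.mem_filter, Finset.mem_univ, true_and] at hσ ⊢
    have hgrp : (τ * σ) * ω₀ * (τ * σ)⁻¹ = τ * (σ * ω₀ * σ⁻¹) * τ⁻¹ := by group
    rw [hgrp, hσ, hτ]
  · intro σ _
    group
  · intro σ _
    group

lemma orbit_sum (ω₀ : Perm (Fin n)) (g : Perm (Fin n) → ℕ) :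
    ∑ σ : Perm (Fin n), g (σ * ω₀ * σ⁻¹)
      = (univ.filter fun σ : Perm (Fin n) => σ * ω₀ * σ⁻¹ = ω₀).card
        * ∑ ω ∈ univ.filter (fun ω' : Perm (Fin n) => ω'.cycleType = ω₀.cycleType), g ω := by
  have hmaps : ∀ σ ∈ (univ : Finset (Perm (Fin n))),
      σ * ω₀ * σ⁻¹ ∈ univ.filter (fun ω' : Perm (Fin n) => ω'.cycleType = ω₀.cycleType) := by
    intro σ _
    simp [Equiv.Perm.cycleType_conj]
  rw [← Finset.sum_fiberwise_of_maps_to hmaps (fun σ => g (σ * ω₀ * σ⁻¹))]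
  rw [Finset.mul_sum]
  apply Finset.sum_congr rfl
  intro ω hω
  have hconj : IsConj ω₀ ω := by
    rw [Equiv.Perm.isConj_iff_cycleType_eq]
    exact ((Finset.mem_filter.1 hω).2).symm
  have hconst : ∑ σ ∈ univ.filter (fun σ : Perm (Fin n) => σ * ω₀ * σ⁻¹ = ω),
        g (σ * ω₀ * σ⁻¹)
      = ∑ _σ ∈ univ.filter (fun σ : Perm (Fin n) => σ * ω₀ * σ⁻¹ = ω), g ω :=
    Finset.sum_congr rfl (fun σ hσ => by rw [(Finset.mem_filter.1 hσ).2])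
  rw [hconst, Finset.sum_const, smul_eq_mul, conj_fiber_const ω₀ ω hconj]

theorem stmt7 (n : ℕ) (hn : 3 ≤ n) (lam : n.Partition) (a1 a2 : ℕ)
    (ha1 : a1 = Multiset.count 1 lam.parts) (ha2 : a2 = Multiset.count 2 lam.parts) :
    (∑ ω ∈ conjClass n lam, (invStat ω : ℝ)) / ((conjClass n lam).card : ℝ)
      = (3 * (n : ℝ) ^ 2 - (n : ℝ) + 2 * (a2 : ℝ) - (a1 : ℝ) ^ 2 + (a1 : ℝ)
          - 2 * (n : ℝ) * (a1 : ℝ)) / 12 := by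
  classical
  -- existence of a permutation with the given cycle type
  have hex : ∃ g : Perm (Fin n), g.cycleType = Multiset.filter (fun i => i ≠ 1) lam.parts := by
    rw [Equiv.Perm.exists_with_cycleType_iff (Fin n)]
    constructor
    · rw [Fintype.card_fin]
      obtain ⟨u, hu⟩ := Multiset.le_iff_exists_add.1
        (Multiset.filter_le (fun i => i ≠ 1) lam.parts)
      have hsum : lam.parts.sum
          = (Multiset.filter (fun i => i ≠ 1) lam.parts).sum + u.sum := by
        rw [← Multiset.sum_add, ← hu]
      have hps := lam.parts_sum
      omega
    · intro a ha
      rw [Multiset.mem_filter] at ha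
      have h1 := lam.parts_pos ha.1
      have h2 := ha.2
      omega
  obtain ⟨ω₀, hω₀⟩ := hex
  -- fixed points
  have hfm : (univ.filter fun x : Fin n => ω₀ x = x).card
      + (univ.filter fun x : Fin n => ω₀ x ≠ x).card = n := by
    have h := Finset.card_filter_add_card_filter_not
      (s := (univ : Finset (Fin n))) (p := fun x : Fin n => ω₀ x = x)
    simpa [Finset.card_univ] using h
  have hm : (univ.filter fun x : Fin n => ω₀ x ≠ x).card
      = (Multiset.filter (fun i => i ≠ 1) lam.parts).sum := by
    have h1 : (univ.filter fun x : Fin n => ω₀ x ≠ x) = ω₀.support := rfl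
    rw [h1, ← Equiv.Perm.sum_cycleType, hω₀]
  have hsa1 : (Multiset.filter (fun i => i ≠ 1) lam.parts).sum + a1 = n := by
    have hadd := congrArg Multiset.sum (Multiset.filter_add_not (fun i => i ≠ 1) lam.parts)
    rw [Multiset.sum_add] at hadd
    have hnot : (lam.parts.filter fun i => ¬ i ≠ 1)
        = Multiset.replicate (Multiset.count 1 lam.parts) 1 := by
      rw [← Multiset.filter_eq']
      apply Multiset.filter_congr
      intro x _
      simp
    rw [hnot, Multiset.sum_replicate, smul_eq_mul, mul_one, lam.parts_sum] at hadd
    rw [ha1]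
    exact hadd
  have hf : (univ.filter fun x : Fin n => ω₀ x = x).card = a1 := by omega
  -- two-cycles
  have hp2 : (univ.filter fun x : Fin n => ω₀ x ≠ x ∧ ω₀ (ω₀ x) = x).card = 2 * a2 := by
    rw [p2_card_eq ω₀, hω₀, Multiset.count_filter]
    simp [ha2]
  have hp23 : (univ.filter fun x : Fin n => ω₀ x ≠ x ∧ ω₀ (ω₀ x) = x).card
      + (univ.filter fun x : Fin n => ω₀ (ω₀ x) ≠ x).card
      = (univ.filter fun x : Fin n => ω₀ x ≠ x).card := by
    simp only [Finset.card_filter, ← Finset.sum_add_distrib]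
    apply Finset.sum_congr rfl
    intro x _
    have himp : ω₀ x = x → ω₀ (ω₀ x) = x := fun h => (congrArg ω₀ h).trans h
    split_ifs <;> omega
  -- the conjugacy class
  have hC : conjClass n lam
      = univ.filter (fun ω' : Perm (Fin n) => ω'.cycleType = ω₀.cycleType) := by
    unfold conjClass
    rw [hω₀]
  have hω₀C : ω₀ ∈ conjClass n lam := by
    rw [hC]
    simp
  -- orbit sums
  have horb := orbit_sum ω₀ invStat
  have horb1 := orbit_sum ω₀ (fun _ => 1)
  rw [sum_invStat_eq_sum_pairN, ← hC] at horb
  rw [← hC] at horb1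
  simp only [Finset.sum_const, smul_eq_mul, mul_one] at horb1
  -- horb1 : #univ = K0 * #(conjClass n lam)
  have h12 := twelve_sum_pairN ω₀
  rw [horb] at h12
  -- h12 : 12 * (K0 * Σ_C invStat) = W * #univ
  have hK0pos : 0 < (univ.filter fun σ : Perm (Fin n) => σ * ω₀ * σ⁻¹ = ω₀).card := by
    apply Finset.card_pos.2
    exact ⟨1, by simp⟩
  have hcCpos : 0 < (conjClass n lam).card := Finset.card_pos.2 ⟨ω₀, hω₀C⟩
  have hcancel : 12 * ∑ ω ∈ conjClass n lam, invStat ω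
      = (∑ p : Fin n × Fin n, wgt ω₀ p) * (conjClass n lam).card := by
    have h12' : (univ.filter fun σ : Perm (Fin n) => σ * ω₀ * σ⁻¹ = ω₀).card
          * (12 * ∑ ω ∈ conjClass n lam, invStat ω)
        = (univ.filter fun σ : Perm (Fin n) => σ * ω₀ * σ⁻¹ = ω₀).card
          * ((∑ p : Fin n × Fin n, wgt ω₀ p) * (conjClass n lam).card) := by
      calc (univ.filter fun σ : Perm (Fin n) => σ * ω₀ * σ⁻¹ = ω₀).card
            * (12 * ∑ ω ∈ conjClass n lam, invStat ω)
          = 12 * ((univ.filter fun σ : Perm (Fin n) => σ * ω₀ * σ⁻¹ = ω₀).card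
              * ∑ ω ∈ conjClass n lam, invStat ω) := by ring
        _ = (∑ p : Fin n × Fin n, wgt ω₀ p) * (univ : Finset (Perm (Fin n))).card := h12
        _ = (∑ p : Fin n × Fin n, wgt ω₀ p)
              * ((univ.filter fun σ : Perm (Fin n) => σ * ω₀ * σ⁻¹ = ω₀).card
                * (conjClass n lam).card) := by rw [← horb1]
        _ = _ := by ring
    exact Nat.eq_of_mul_eq_mul_left hK0pos h12'
  -- evaluate the weight sum over ℝ
  obtain ⟨M, hM⟩ : ∃ M, (univ.filter fun x : Fin n => ω₀ x ≠ x).card = M := ⟨_, rfl⟩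
  obtain ⟨P3, hP3⟩ : ∃ P3, (univ.filter fun x : Fin n => ω₀ (ω₀ x) ≠ x).card = P3 := ⟨_, rfl⟩
  have hsw := sum_wgt ω₀
  rw [hM, hP3, hp2] at hsw
  rw [hM, hP3, hp2] at hp23
  rw [hM] at hfm
  rw [hf] at hfm
  rw [hf] at hsw
  -- cast to ℝ
  have hswR := congrArg (Nat.cast : ℕ → ℝ) hsw
  have hfmR := congrArg (Nat.cast : ℕ → ℝ) hfm
  have hp23R := congrArg (Nat.cast : ℕ → ℝ) hp23
  have hcancelR := congrArg (Nat.cast : ℕ → ℝ) hcancel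
  push_cast at hswR hfmR hp23R hcancelR
  have hMR : (M : ℝ) = n - a1 := by linarith
  have hP3R : (P3 : ℝ) = (n : ℝ) - a1 - 2 * a2 := by linarith
  rw [hMR, hP3R] at hswR
  have hWR : (∑ p : Fin n × Fin n, (wgt ω₀ p : ℝ))
      = 3 * (n : ℝ) ^ 2 - (n : ℝ) + 2 * (a2 : ℝ) - (a1 : ℝ) ^ 2 + (a1 : ℝ)
        - 2 * (n : ℝ) * (a1 : ℝ) := by linear_combination hswR
  -- finish
  have hsum : ∑ ω ∈ conjClass n lam, (invStat ω : ℝ)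
      = ((∑ ω ∈ conjClass n lam, invStat ω : ℕ) : ℝ) := by push_cast; rfl
  rw [hsum]
  have hcCne : ((conjClass n lam).card : ℝ) ≠ 0 := Nat.cast_ne_zero.2 hcCpos.ne'
  push_cast
  field_simp
  linear_combination hcancelR + ((conjClass n lam).card : ℝ) * hWR
end

section
/- Let n ≥ 2 and let λ be a partition of n with a_1 parts equal to 1. Over the conjugacy class C_λ, the average number of excedances equals (n − a_1)/2, the average number of anti-excedances equals (n − a_1)/2, and the average number of weak excedances equals (n + a_1)/2. -/
/-- The number of excedances of a permutation: indices `i` with `ω i > i`. -/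
def exc {n : ℕ} (ω : Equiv.Perm (Fin n)) : ℕ :=
  (Finset.univ.filter fun i : Fin n => i < ω i).card

/-- The number of anti-excedances of a permutation: indices `i` with `ω i < i`. -/
def aexc {n : ℕ} (ω : Equiv.Perm (Fin n)) : ℕ :=
  (Finset.univ.filter fun i : Fin n => ω i < i).card

/-- The number of weak excedances of a permutation: indices `i` with `ω i ≥ i`. -/
def wexc {n : ℕ} (ω : Equiv.Perm (Fin n)) : ℕ :=
  (Finset.univ.filter fun i : Fin n => i ≤ ω i).card

lemma exc_add_aexc {n : ℕ} (ω : Equiv.Perm (Fin n)) :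
    exc ω + aexc ω = ω.support.card := by
  rw [exc, aexc, ← Finset.card_union_of_disjoint, ← Finset.filter_or]
  · congr 1
    ext i
    simp [Equiv.Perm.mem_support, lt_or_lt_iff_ne, eq_comm, or_comm, Finset.mem_filter]
  · rw [Finset.disjoint_filter]
    intro i _ h1 h2
    exact absurd (h1.trans h2) (lt_irrefl _)

lemma aexc_add_wexc {n : ℕ} (ω : Equiv.Perm (Fin n)) :
    aexc ω + wexc ω = n := by
  have := Finset.card_filter_add_card_filter_not
    (s := (Finset.univ : Finset (Fin n))) (p := fun i => ω i < i)
  simpa [aexc, wexc, not_lt] using this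

lemma exc_conj {n : ℕ} (ω : Equiv.Perm (Fin n)) :
    exc (Fin.revPerm * ω * Fin.revPerm⁻¹) = aexc ω := by
  have key : ∀ i : Fin n, ((Fin.revPerm * ω * Fin.revPerm⁻¹ : Equiv.Perm (Fin n)) i)
      = (ω i.rev).rev := by
    intro i
    simp [Equiv.Perm.mul_apply, Equiv.Perm.inv_def]
  rw [exc, aexc]
  apply Finset.card_nbij' (i := fun i => i.rev) (j := fun i => i.rev)
  · intro i hi
    simp only [Finset.mem_coe, Finset.mem_filter, Finset.mem_univ, true_and, key] at hi ⊢
    exact Fin.rev_lt_rev.mp (by simpa using hi)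
  · intro i hi
    simp only [Finset.mem_coe, Finset.mem_filter, Finset.mem_univ, true_and, key, Fin.rev_rev] at hi ⊢
    exact Fin.rev_lt_rev.mpr hi
  · intro i _; exact Fin.rev_rev i
  · intro i _; exact Fin.rev_rev i

theorem stmt10 (n : ℕ) (hn : 2 ≤ n) (lam : n.Partition) (a1 : ℕ)
    (ha1 : a1 = Multiset.count 1 lam.parts) :
    (∑ ω ∈ conjClass n lam, (exc ω : ℝ)) / ((conjClass n lam).card : ℝ)
      = ((n : ℝ) - (a1 : ℝ)) / 2 ∧
    (∑ ω ∈ conjClass n lam, (aexc ω : ℝ)) / ((conjClass n lam).card : ℝ)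
      = ((n : ℝ) - (a1 : ℝ)) / 2 ∧
    (∑ ω ∈ conjClass n lam, (wexc ω : ℝ)) / ((conjClass n lam).card : ℝ)
      = ((n : ℝ) + (a1 : ℝ)) / 2 := by
  have hsum : a1 + (Multiset.filter (fun i => i ≠ 1) lam.parts).sum = n := by
    have hsplit := Multiset.filter_add_not (fun i => i = 1) lam.parts
    have h1 : (Multiset.filter (fun i => i = 1) lam.parts).sum = a1 := by
      have : Multiset.filter (fun i => i = 1) lam.parts
          = Multiset.replicate (Multiset.count 1 lam.parts) 1 := by
        simpa using Multiset.filter_eq' lam.parts 1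
      rw [this, Multiset.sum_replicate, ha1, smul_eq_mul, mul_one]
    have h2 : Multiset.filter (fun a => ¬ a = 1) lam.parts
        = Multiset.filter (fun i => i ≠ 1) lam.parts := by
      apply Multiset.filter_congr; intro x _; simp [Ne]
    calc a1 + (Multiset.filter (fun i => i ≠ 1) lam.parts).sum
        = (Multiset.filter (fun i => i = 1) lam.parts
            + Multiset.filter (fun a => ¬ a = 1) lam.parts).sum := by
          rw [Multiset.sum_add, h1, h2]
      _ = lam.parts.sum := by rw [hsplit]
      _ = n := lam.parts_sum
  have ha1n : a1 ≤ n := le_of_add_le_left hsum.le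
  have hne : (conjClass n lam).Nonempty := by
    obtain ⟨g, hg⟩ := (Equiv.Perm.exists_with_cycleType_iff (Fin n)
        (m := Multiset.filter (fun i => i ≠ 1) lam.parts)).mpr
      ⟨by simp only [Fintype.card_fin]; omega, by
        intro a ha
        rw [Multiset.mem_filter] at ha
        have := lam.parts_pos ha.1
        have := ha.2
        omega⟩
    exact ⟨g, by simp [conjClass, hg]⟩
  have hcard : ((conjClass n lam).card : ℝ) ≠ 0 := by
    exact_mod_cast Finset.card_ne_zero_of_mem hne.choose_spec
  have hsupp : ∀ ω ∈ conjClass n lam,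
      ω.support.card = (Multiset.filter (fun i => i ≠ 1) lam.parts).sum := by
    intro ω hω
    rw [conjClass, Finset.mem_filter] at hω
    rw [← Equiv.Perm.sum_cycleType, hω.2]
  have hEA : (∑ ω ∈ conjClass n lam, (exc ω : ℝ)) = ∑ ω ∈ conjClass n lam, (aexc ω : ℝ) := by
    have hmem : ∀ ω ∈ conjClass n lam,
        Fin.revPerm * ω * Fin.revPerm⁻¹ ∈ conjClass n lam := by
      intro ω hω
      rw [conjClass, Finset.mem_filter] at hω ⊢
      exact ⟨Finset.mem_univ _, by rw [Equiv.Perm.cycleType_conj]; exact hω.2⟩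
    have hinv : ∀ ω : Equiv.Perm (Fin n),
        Fin.revPerm * (Fin.revPerm * ω * Fin.revPerm⁻¹) * Fin.revPerm⁻¹ = ω := by
      intro ω
      ext i
      simp [Equiv.Perm.mul_apply, Equiv.Perm.inv_def]
    refine Finset.sum_nbij' (i := fun ω => Fin.revPerm * ω * Fin.revPerm⁻¹)
      (j := fun ω => Fin.revPerm * ω * Fin.revPerm⁻¹) hmem hmem
      (fun ω _ => hinv ω) (fun ω _ => hinv ω) ?_
    intro ω _
    have := exc_conj (Fin.revPerm * ω * Fin.revPerm⁻¹)
    rw [hinv ω] at this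
    rw [← this]
  have h2S : 2 * (∑ ω ∈ conjClass n lam, (aexc ω : ℝ))
      = ((n : ℝ) - a1) * (conjClass n lam).card := by
    have hsplit : (∑ ω ∈ conjClass n lam, (exc ω : ℝ)) + (∑ ω ∈ conjClass n lam, (aexc ω : ℝ))
        = ∑ ω ∈ conjClass n lam, (((exc ω : ℝ)) + (aexc ω : ℝ)) := Finset.sum_add_distrib.symm
    have hval : ∑ ω ∈ conjClass n lam, (((exc ω : ℝ)) + (aexc ω : ℝ))
        = ((n : ℝ) - a1) * (conjClass n lam).card := by
      rw [Finset.sum_congr rfl (g := fun _ => (n : ℝ) - a1) ?_, Finset.sum_const,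
        nsmul_eq_mul, mul_comm]
      intro ω hω
      show ((exc ω : ℝ)) + (aexc ω : ℝ) = (n : ℝ) - a1
      have h1 : exc ω + aexc ω = (Multiset.filter (fun i => i ≠ 1) lam.parts).sum := by
        rw [exc_add_aexc, hsupp ω hω]
      have h1' : ((exc ω : ℝ)) + (aexc ω : ℝ)
          = ((Multiset.filter (fun i => i ≠ 1) lam.parts).sum : ℝ) := by exact_mod_cast h1
      have h2' : (a1 : ℝ) + ((Multiset.filter (fun i => i ≠ 1) lam.parts).sum : ℝ) = n := by
        exact_mod_cast hsum
      linarith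
    rw [two_mul]
    nth_rewrite 1 [← hEA]
    rw [hsplit, hval]
  have hW : (∑ ω ∈ conjClass n lam, (wexc ω : ℝ))
      = (n : ℝ) * (conjClass n lam).card - ∑ ω ∈ conjClass n lam, (aexc ω : ℝ) := by
    have hsplit : (∑ ω ∈ conjClass n lam, (aexc ω : ℝ)) + (∑ ω ∈ conjClass n lam, (wexc ω : ℝ))
        = ∑ ω ∈ conjClass n lam, (((aexc ω : ℝ)) + (wexc ω : ℝ)) := Finset.sum_add_distrib.symm
    have hval : ∑ ω ∈ conjClass n lam, (((aexc ω : ℝ)) + (wexc ω : ℝ))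
        = (n : ℝ) * (conjClass n lam).card := by
      rw [Finset.sum_congr rfl (g := fun _ => (n : ℝ)) ?_, Finset.sum_const,
        nsmul_eq_mul, mul_comm]
      intro ω _
      show ((aexc ω : ℝ)) + (wexc ω : ℝ) = (n : ℝ)
      exact_mod_cast aexc_add_wexc ω
    linarith [hsplit.trans hval]
  refine ⟨?_, ?_, ?_⟩
  · rw [hEA, div_eq_iff hcard]; linarith
  · rw [div_eq_iff hcard]; linarith
  · rw [hW, div_eq_iff hcard]; linarith
end
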